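/- Let R be a commutative ring and let I be a finitely generated pure ideal of R. Then R is semihereditary if and only if R⋈I is semihereditary. -/

import Mathlib

universe u

open scoped TensorProduct

namespace Paper

/-- The amalgamated duplication `R ⋈ I`, as the subring
`{(r, s) : s - r ∈ I} = {(r, r+i) : r ∈ R, i ∈ I}` of `R × R`. -/
def dup (R : Type*) [CommRing R] (I : Ideal R) : Subring (R × R) where
  carrier := {p | p.2 - p.1 ∈ I}
  zero_mem' := by simp
  one_mem' := by simp
  add_mem' := by
    intro a b ha hb
    simp only [Set.mem_setOf_eq, Prod.fst_add, Prod.snd_add] at *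
    have h : a.2 + b.2 - (a.1 + b.1) = (a.2 - a.1) + (b.2 - b.1) := by ring
    rw [h]; exact I.add_mem ha hb
  neg_mem' := by
    intro a ha
    simp only [Set.mem_setOf_eq, Prod.fst_neg, Prod.snd_neg] at *
    have h : -a.2 - -a.1 = -(a.2 - a.1) := by ring
    rw [h]; exact I.neg_mem ha
  mul_mem' := by
    intro a b ha hb
    simp only [Set.mem_setOf_eq, Prod.fst_mul, Prod.snd_mul] at *
    have h : a.2 * b.2 - a.1 * b.1 = a.2 * (b.2 - b.1) + (a.2 - a.1) * b.1 := by ring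
    rw [h]; exact I.add_mem (I.mul_mem_left _ hb) (I.mul_mem_right _ ha)

lemma mem_dup {R : Type*} [CommRing R] {I : Ideal R} {p : R × R} :
    p ∈ dup R I ↔ p.2 - p.1 ∈ I := Iff.rfl

/-- The diagonal embedding `R → R ⋈ I`, `r ↦ (r, r)`. -/
def diag (R : Type*) [CommRing R] (I : Ideal R) : R →+* dup R I where
  toFun r := ⟨(r, r), mem_dup.mpr (by simp)⟩
  map_one' := rfl
  map_mul' _ _ := rfl
  map_zero' := rfl
  map_add' _ _ := rfl

noncomputable instance dupAlgebra (R : Type*) [CommRing R] (I : Ideal R) :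
    Algebra R (dup R I) := (diag R I).toAlgebra

/-- `pdLE R n M` means that `M` has projective dimension `≤ n` as an `R`-module. -/
def pdLE (R : Type u) [CommRing R] : ℕ → (M : Type u) → [AddCommGroup M] → [Module R M] → Prop
  | 0, M, _, _ => Module.Projective R M
  | (n + 1), M, _, _ => pdLE R n (LinearMap.ker (Finsupp.linearCombination R (id : M → M)))

/-- `fdLE R n M` means that `M` has flat dimension `≤ n` as an `R`-module. -/
def fdLE (R : Type u) [CommRing R] : ℕ → (M : Type u) → [AddCommGroup M] → [Module R M] → Prop
  | 0, M, _, _ => Module.Flat R M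
  | (n + 1), M, _, _ => fdLE R n (LinearMap.ker (Finsupp.linearCombination R (id : M → M)))

/-- The projective dimension of an `R`-module `M`, as an element of `ℕ∞`. -/
noncomputable def projDim (R : Type u) [CommRing R] (M : Type u) [AddCommGroup M]
    [Module R M] : ℕ∞ :=
  sInf {n : ℕ∞ | ∃ k : ℕ, (k : ℕ∞) = n ∧ pdLE R k M}

/-- The flat dimension of an `R`-module `M`, as an element of `ℕ∞`. -/
noncomputable def flatDim (R : Type u) [CommRing R] (M : Type u) [AddCommGroup M]
    [Module R M] : ℕ∞ :=
  sInf {n : ℕ∞ | ∃ k : ℕ, (k : ℕ∞) = n ∧ fdLE R k M}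

/-- The global dimension of `R`: the supremum of projective dimensions of `R`-modules. -/
noncomputable def gldim (R : Type u) [CommRing R] : ℕ∞ :=
  ⨆ (M : Type u) (_ : AddCommGroup M) (_ : Module R M), projDim R M

/-- The weak global dimension of `R`: the supremum of flat dimensions of `R`-modules. -/
noncomputable def wdim (R : Type u) [CommRing R] : ℕ∞ :=
  ⨆ (M : Type u) (_ : AddCommGroup M) (_ : Module R M), flatDim R M


/-- The first projection `R ⋈ I → R`, `(r, r+i) ↦ r`. -/
def dupFst (R : Type*) [CommRing R] (I : Ideal R) : dup R I →+* R :=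
  (RingHom.fst R R).comp (dup R I).subtype

/-- The second projection `R ⋈ I → R`, `(r, r+i) ↦ r + i`. -/
def dupSnd (R : Type*) [CommRing R] (I : Ideal R) : dup R I →+* R :=
  (RingHom.snd R R).comp (dup R I).subtype

/-- A commutative ring is von Neumann regular if every `a` satisfies `a = a²b` for some `b`. -/
def IsVNRegular (R : Type*) [CommRing R] : Prop := ∀ a : R, ∃ b : R, a = a * a * b

/-- A commutative ring is semihereditary if every finitely generated ideal is projective. -/
def IsSemihereditary (R : Type*) [CommRing R] : Prop :=
  ∀ J : Ideal R, J.FG → Module.Projective R J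

/-- A commutative ring is coherent if every finitely generated ideal is finitely presented. -/
def IsCoherentRing (R : Type*) [CommRing R] : Prop :=
  ∀ J : Ideal R, J.FG → Module.FinitePresentation R J

/-- The content of a polynomial: the ideal generated by its coefficients. -/
def contentIdeal {R : Type*} [CommRing R] (f : Polynomial R) : Ideal R :=
  Ideal.span (Set.range f.coeff)

/-- A commutative ring is Gaussian if `c(fg) = c(f)c(g)` for all polynomials `f, g`. -/
def IsGaussianRing (R : Type*) [CommRing R] : Prop :=
  ∀ f g : Polynomial R, contentIdeal (f * g) = contentIdeal f * contentIdeal g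

/-- `R` is a `(1,d)`-ring if every finitely presented (i.e. `1`-presented) `R`-module has
projective dimension at most `d`. -/
def IsOneDRing (R : Type u) [CommRing R] (d : ℕ) : Prop :=
  ∀ (M : Type u) [AddCommGroup M] [Module R M],
    Module.FinitePresentation R M → projDim R M ≤ (d : ℕ∞)

/-- The trace ideal of an `R`-module `M`: the sum of the images of all `R`-linear maps
`M → R`. -/
def traceIdeal (R : Type*) [CommRing R] (M : Type*) [AddCommGroup M] [Module R M] : Ideal R :=
  ⨆ f : M →ₗ[R] R, LinearMap.range f



/-- Projectivity descends along a surjective algebra map. -/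
lemma projective_of_surjective_algebraMap {A B : Type*} [CommRing A] [CommRing B] [Algebra A B]
    (h : Function.Surjective (algebraMap A B)) (M : Type*) [AddCommGroup M]
    [Module A M] [Module B M] [IsScalarTower A B M] [Module.Projective A M] :
    Module.Projective B M := by
  obtain ⟨s, hs⟩ := Module.projective_def'.mp ‹Module.Projective A M›
  let t : M →ₗ[A] (M →₀ B) :=
    (Finsupp.mapRange.linearMap (Algebra.linearMap A B)).comp s
  refine Module.projective_def'.mpr ⟨t.extendScalarsOfSurjective h, ?_⟩
  ext m
  have hm : Finsupp.linearCombination A (id : M → M) (s m) = m := by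
    exact congrFun (congrArg DFunLike.coe hs) m
  have : Finsupp.linearCombination B (id : M → M)
      ((s m).mapRange (Algebra.linearMap A B) (map_zero _)) =
      Finsupp.linearCombination A (id : M → M) (s m) := by
    rw [Finsupp.linearCombination_apply, Finsupp.linearCombination_apply,
      Finsupp.sum_mapRange_index (by simp)]
    refine Finsupp.sum_congr fun x _ => ?_
    simp [Algebra.linearMap_apply, algebraMap_smul]
  simpa [t, this] using hm

/-- `ι →₀ N` is projective if `N` is. -/
lemma projective_finsupp {A : Type*} [CommRing A] (ι : Type*) (N : Type*) [AddCommGroup N]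
    [Module A N] [Module.Projective A N] : Module.Projective A (ι →₀ N) := by
  obtain ⟨i, hi⟩ := Module.Projective.iff_split.mp ‹Module.Projective A N›
  obtain ⟨_, _, _, fi, sp, hsp⟩ := hi
  exact Module.Projective.of_split
    (Finsupp.mapRange.linearMap fi) (Finsupp.mapRange.linearMap sp)
    (by
      have h' : ∀ n, sp (fi n) = n := fun n => by simpa using DFunLike.congr_fun hsp n
      ext x n; simp [h'])


/-- Projectivity ascends along an algebra map whose target is projective over the base. -/
lemma projective_of_projective_algebra {A B : Type*} [CommRing A] [CommRing B] [Algebra A B]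
    [Module.Projective A B] (M : Type*) [AddCommGroup M]
    [Module A M] [Module B M] [IsScalarTower A B M] [Module.Projective B M] :
    Module.Projective A M := by
  obtain ⟨s, hs⟩ := Module.projective_def'.mp ‹Module.Projective B M›
  haveI : Module.Projective A (M →₀ B) := projective_finsupp M B
  refine Module.Projective.of_split (s.restrictScalars A)
    ((Finsupp.linearCombination B (id : M → M)).restrictScalars A) ?_
  ext m
  simpa using DFunLike.congr_fun hs m

/-- The quotient by an ideal generated by an idempotent is a projective module. -/
lemma projective_quotient_span_idem {A : Type*} [CommRing A] {f : A}
    (hf : IsIdempotentElem f) :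
    Module.Projective A (A ⧸ Ideal.span {f}) := by
  have hmul : (1 - f) * f = 0 := by rw [sub_mul, one_mul, hf.eq, sub_self]
  have hle : Ideal.span {f} ≤ LinearMap.ker ((1 - f) • (LinearMap.id : A →ₗ[A] A)) := by
    rw [Ideal.span_le, Set.singleton_subset_iff]
    simp only [SetLike.mem_coe, LinearMap.mem_ker, LinearMap.smul_apply, LinearMap.id_coe,
      id_eq, smul_eq_mul]
    exact hmul
  refine Module.Projective.of_split (Submodule.liftQ (Ideal.span {f}) _ hle)
    (Ideal.span {f}).mkQ ?_
  apply Submodule.linearMap_qext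
  ext
  simp only [LinearMap.comp_apply, Submodule.mkQ_apply, Submodule.liftQ_apply,
    LinearMap.smul_apply, LinearMap.id_coe, id_eq, smul_eq_mul, LinearMap.id_apply]
  have h1 : ((1 : A) - f) * 1 - 1 = -f := by ring
  rw [Submodule.Quotient.eq, h1]
  exact neg_mem (Ideal.subset_span rfl)


lemma exists_idem {R : Type u} [CommRing R] (I : Ideal R) (hfg : I.FG)
    (hpure : Module.Flat R (R ⧸ I)) :
    ∃ e : R, IsIdempotentElem e ∧ I = Ideal.span {e} := by
  haveI : Module.FinitePresentation R (R ⧸ I) :=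
    Module.finitePresentation_of_surjective I.mkQ (Submodule.mkQ_surjective I)
      (by rwa [Submodule.ker_mkQ])
  have hproj : Module.Projective R (R ⧸ I) := by
    obtain ⟨κ, h₂, h₃, hcomp⟩ :=
      Module.Flat.exists_factorization_of_isFinitelyPresented
        (LinearMap.id : (R ⧸ I) →ₗ[R] (R ⧸ I))
    exact Module.Projective.of_split h₂ h₃ hcomp.symm
  obtain ⟨g, hg⟩ := Module.projective_lifting_property I.mkQ LinearMap.id
    (Submodule.mkQ_surjective I)
  set c : R := g (I.mkQ 1) with hc
  have hxc : ∀ x : R, g (I.mkQ x) = x * c := by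
    intro x
    calc g (I.mkQ x) = g (x • I.mkQ (1 : R)) := by rw [← map_smul, smul_eq_mul, mul_one]
      _ = x • c := by rw [map_smul]
      _ = x * c := by rw [smul_eq_mul]
  have hmk : ∀ x : R, I.mkQ (x * c) = I.mkQ x := by
    intro x
    rw [← hxc]
    simpa using DFunLike.congr_fun hg (I.mkQ x)
  have hI0 : ∀ x ∈ I, x * c = 0 := by
    intro x hx
    have h0 : I.mkQ x = 0 := (Submodule.Quotient.mk_eq_zero I).mpr hx
    rw [← hxc, h0, map_zero]
  have heI : (1 : R) - c ∈ I := by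
    have h1 := hmk 1
    rw [one_mul] at h1
    have h2 : I.mkQ (1 - c) = 0 := by rw [map_sub, h1, sub_self]
    exact (Submodule.Quotient.mk_eq_zero I).mp h2
  refine ⟨1 - c, ?_, ?_⟩
  · have h0 := hI0 _ heI
    show (1 - c) * (1 - c) = 1 - c
    calc (1 - c) * (1 - c) = (1 - c) - (1 - c) * c := by ring
      _ = 1 - c := by rw [h0, sub_zero]
  · apply le_antisymm
    · intro x hx
      rw [Ideal.mem_span_singleton]
      exact ⟨x, by linear_combination hI0 x hx⟩
    · rw [Ideal.span_le, Set.singleton_subset_iff]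
      exact heI


attribute [local instance] RingHomInvPair.of_ringEquiv

lemma isSemihereditary_of_ringEquiv {A B : Type*} [CommRing A] [CommRing B]
    (σ : A ≃+* B) (h : IsSemihereditary A) : IsSemihereditary B := by
  intro J hJ
  have hcomap : J.comap (σ : A →+* B) = J.map (σ.symm : B →+* A) := by
    have := Ideal.comap_symm (I := J) σ.symm
    rwa [RingEquiv.symm_symm] at this
  have hJ' : (J.comap (σ : A →+* B)).FG := by
    rw [hcomap]; exact Ideal.FG.map hJ _
  haveI : Module.Projective A ↥(J.comap (σ : A →+* B)) := h _ hJ'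
  let e₂ : ↥(J.comap (σ : A →+* B)) ≃ₛₗ[RingHomClass.toRingHom σ] ↥J :=
  { toFun := fun x => ⟨σ x.1, Ideal.mem_comap.mp x.2⟩
    invFun := fun y => ⟨σ.symm y.1, by
      rw [Ideal.mem_comap]
      simpa using y.2⟩
    map_add' := fun x y => Subtype.ext (by simp)
    map_smul' := fun a x => Subtype.ext (by
      simp [Submodule.coe_smul, smul_eq_mul, map_mul])
    left_inv := fun x => Subtype.ext (by simp)
    right_inv := fun y => Subtype.ext (by simp) }
  exact Module.Projective.of_equiv (σ' := RingHomClass.toRingHom σ.symm) e₂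

lemma isSemihereditary_quotient_span_idem {A : Type*} [CommRing A] {f : A}
    (hf : IsIdempotentElem f) (h : IsSemihereditary A) :
    IsSemihereditary (A ⧸ Ideal.span {f}) := by
  intro J hJ
  set S := A ⧸ Ideal.span {f} with hS
  set π := Ideal.Quotient.mk (Ideal.span {f}) with hπ
  have halg : algebraMap A S = π := Ideal.Quotient.algebraMap_eq _
  have hsurj : Function.Surjective (algebraMap A S) := by
    rw [halg]; exact Ideal.Quotient.mk_surjective
  have hπf : π f = 0 := Ideal.Quotient.eq_zero_iff_mem.mpr (Ideal.subset_span rfl)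
  have hπ1f : π (1 - f) = 1 := by rw [map_sub, map_one, hπf, sub_zero]
  set J' : Ideal A := J.comap π ⊓ Ideal.span {1 - f} with hJ'
  have hf' : IsIdempotentElem (1 - f) := hf.one_sub
  let ℓ : ↥J' →ₗ[A] ↥J :=
  { toFun := fun x => ⟨π x.1, Ideal.mem_comap.mp x.2.1⟩
    map_add' := fun x y => Subtype.ext (by simp)
    map_smul' := fun a x => Subtype.ext (by
      simp only [Submodule.coe_smul_of_tower, smul_eq_mul, map_mul, RingHom.id_apply,
        SetLike.val_smul, Algebra.smul_def, halg]
      rfl) }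
  have hinj : Function.Injective ℓ := by
    intro x y hxy
    have hxy' : π x.1 = π y.1 := congrArg Subtype.val hxy
    have hxy2 : x.1 - y.1 ∈ Ideal.span {f} := Ideal.Quotient.eq.mp hxy'
    obtain ⟨c, hc⟩ := Ideal.mem_span_singleton.mp hxy2
    have hx1 : x.1 ∈ Ideal.span {1 - f} := x.2.2
    have hy1 : y.1 ∈ Ideal.span {1 - f} := y.2.2
    obtain ⟨cx, hcx⟩ := Ideal.mem_span_singleton.mp hx1
    obtain ⟨cy, hcy⟩ := Ideal.mem_span_singleton.mp hy1
    apply Subtype.ext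
    have h1' : (1 - f) * (x.1 - y.1) = x.1 - y.1 := by
      rw [hcx, hcy, ← mul_sub, ← mul_assoc, hf'.eq]
    have h0 : (1 - f) * (x.1 - y.1) = 0 := by
      rw [hc, ← mul_assoc, sub_mul, one_mul, hf.eq, sub_self, zero_mul]
    exact sub_eq_zero.mp (h1'.symm.trans h0)
  have hsurjℓ : Function.Surjective ℓ := by
    rintro ⟨y, hy⟩
    obtain ⟨a, ha⟩ := Ideal.Quotient.mk_surjective (I := Ideal.span {f}) y
    refine ⟨⟨(1 - f) * a, ?_, Ideal.mem_span_singleton.mpr ⟨a, rfl⟩⟩, ?_⟩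
    · simp only [SetLike.mem_coe]
      rw [Ideal.mem_comap, map_mul, hπ1f, one_mul, ha]
      exact hy
    · apply Subtype.ext
      show π ((1 - f) * a) = y
      rw [map_mul, hπ1f, one_mul, ha]
  let e : ↥J' ≃ₗ[A] ↥J := LinearEquiv.ofBijective ℓ ⟨hinj, hsurjℓ⟩
  haveI : Module.Finite S ↥J := Module.Finite.iff_fg.mpr hJ
  haveI : Module.Finite A S := Module.Finite.of_surjective (Algebra.linearMap A S) hsurj
  haveI : Module.Finite A ↥J := Module.Finite.trans S ↥J
  haveI : Module.Finite A ↥J' := Module.Finite.equiv e.symm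
  haveI : Module.Projective A ↥J' := h J' (Module.Finite.iff_fg.mp ‹Module.Finite A ↥J'›)
  haveI : Module.Projective A ↥J := Module.Projective.of_equiv e
  exact projective_of_surjective_algebraMap hsurj ↥J

lemma projective_half {A : Type*} [CommRing A] {f : A}
    (hf : IsIdempotentElem f) (h1 : IsSemihereditary (A ⧸ Ideal.span {f}))
    {J : Ideal A} (hJ : J.FG) :
    Module.Projective A ↥(Ideal.span {1 - f} * J) := by
  set S := A ⧸ Ideal.span {f} with hS
  set π := Ideal.Quotient.mk (Ideal.span {f}) with hπ
  have halg : algebraMap A S = π := Ideal.Quotient.algebraMap_eq _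
  have hπf : π f = 0 := Ideal.Quotient.eq_zero_iff_mem.mpr (Ideal.subset_span rfl)
  have hπ1f : π (1 - f) = 1 := by rw [map_sub, map_one, hπf, sub_zero]
  have hf' : IsIdempotentElem (1 - f) := hf.one_sub
  set J₁ : Ideal S := J.map π with hJ₁def
  have hJ₁ : J₁.FG := Ideal.FG.map hJ π
  haveI : Module.Projective S ↥J₁ := h1 J₁ hJ₁
  haveI : Module.Projective A S := projective_quotient_span_idem hf
  haveI : Module.Projective A ↥J₁ := projective_of_projective_algebra (A := A) (B := S) ↥J₁
  set K : Ideal A := Ideal.span {1 - f} * J with hK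
  let ℓ : ↥K →ₗ[A] ↥J₁ :=
  { toFun := fun x => ⟨π x.1, Ideal.mem_map_of_mem π (Ideal.mul_le_right x.2)⟩
    map_add' := fun x y => Subtype.ext (by simp)
    map_smul' := fun a x => Subtype.ext (by
      simp only [Submodule.coe_smul_of_tower, smul_eq_mul, map_mul, RingHom.id_apply,
        SetLike.val_smul, Algebra.smul_def, halg]) }
  have hinj : Function.Injective ℓ := by
    intro x y hxy
    have hxy' : π x.1 = π y.1 := congrArg Subtype.val hxy
    have hxy2 : x.1 - y.1 ∈ Ideal.span {f} := Ideal.Quotient.eq.mp hxy'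
    obtain ⟨c, hc⟩ := Ideal.mem_span_singleton.mp hxy2
    obtain ⟨cx, hcx⟩ := Ideal.mem_span_singleton.mp (Ideal.mul_le_left x.2)
    obtain ⟨cy, hcy⟩ := Ideal.mem_span_singleton.mp (Ideal.mul_le_left y.2)
    apply Subtype.ext
    have h1' : (1 - f) * (x.1 - y.1) = x.1 - y.1 := by
      rw [hcx, hcy, ← mul_sub, ← mul_assoc, hf'.eq]
    have h0 : (1 - f) * (x.1 - y.1) = 0 := by
      rw [hc, ← mul_assoc, sub_mul, one_mul, hf.eq, sub_self, zero_mul]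
    exact sub_eq_zero.mp (h1'.symm.trans h0)
  have hsurjℓ : Function.Surjective ℓ := by
    rintro ⟨y, hy⟩
    obtain ⟨j, hjJ, hjy⟩ := Ideal.mem_map_iff_of_surjective π
      Ideal.Quotient.mk_surjective |>.mp hy
    refine ⟨⟨(1 - f) * j, Ideal.mul_mem_mul (Ideal.mem_span_singleton_self _) hjJ⟩, ?_⟩
    apply Subtype.ext
    show π ((1 - f) * j) = y
    rw [map_mul, hπ1f, one_mul, hjy]
  exact Module.Projective.of_equiv (LinearEquiv.ofBijective ℓ ⟨hinj, hsurjℓ⟩).symm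

lemma isSemihereditary_glue {A : Type*} [CommRing A] {f : A}
    (hf : IsIdempotentElem f) (h1 : IsSemihereditary (A ⧸ Ideal.span {f}))
    (h2 : IsSemihereditary (A ⧸ Ideal.span {1 - f})) : IsSemihereditary A := by
  intro J hJ
  have hf' : IsIdempotentElem (1 - f) := hf.one_sub
  haveI hK₁ : Module.Projective A ↥(Ideal.span {1 - f} * J) := projective_half hf h1 hJ
  haveI hK₂ : Module.Projective A ↥(Ideal.span {f} * J) := by
    have := projective_half hf' h2 hJ
    rwa [sub_sub_cancel] at this
  let ψ : ↥J →ₗ[A] ↥(Ideal.span {1 - f} * J) × ↥(Ideal.span {f} * J) :=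
  { toFun := fun j =>
      (⟨(1 - f) * j.1, Ideal.mul_mem_mul (Ideal.mem_span_singleton_self _) j.2⟩,
       ⟨f * j.1, Ideal.mul_mem_mul (Ideal.mem_span_singleton_self _) j.2⟩)
    map_add' := fun x y => by
      apply Prod.ext <;> apply Subtype.ext <;> simp [mul_add]
    map_smul' := fun a x => by
      apply Prod.ext <;> apply Subtype.ext <;>
        simp only [Submodule.coe_smul_of_tower, smul_eq_mul, RingHom.id_apply, Prod.smul_fst,
          Prod.smul_snd, SetLike.val_smul] <;> ring }
  have hinj : Function.Injective ψ := by
    intro x y hxy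
    have h1' : (1 - f) * x.1 = (1 - f) * y.1 := congrArg (Subtype.val ∘ Prod.fst) hxy
    have h2' : f * x.1 = f * y.1 := congrArg (Subtype.val ∘ Prod.snd) hxy
    apply Subtype.ext
    have : (1 - f) * x.1 + f * x.1 = (1 - f) * y.1 + f * y.1 := by rw [h1', h2']
    calc x.1 = (1 - f) * x.1 + f * x.1 := by ring
      _ = (1 - f) * y.1 + f * y.1 := this
      _ = y.1 := by ring
  have hsurjψ : Function.Surjective ψ := by
    rintro ⟨⟨x, hx⟩, ⟨y, hy⟩⟩
    obtain ⟨cx, hcx⟩ := Ideal.mem_span_singleton.mp (Ideal.mul_le_left hx)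
    obtain ⟨cy, hcy⟩ := Ideal.mem_span_singleton.mp (Ideal.mul_le_left hy)
    refine ⟨⟨x + y, Submodule.add_mem _ (Ideal.mul_le_right hx) (Ideal.mul_le_right hy)⟩, ?_⟩
    apply Prod.ext <;> apply Subtype.ext
    · show (1 - f) * (x + y) = x
      have hz : (1 - f) * f = 0 := by rw [sub_mul, one_mul, hf.eq, sub_self]
      calc (1 - f) * (x + y) = ((1 - f) * (1 - f)) * cx + ((1 - f) * f) * cy := by
            rw [hcx, hcy]; ring
        _ = x := by rw [hz, hf.one_sub.eq, zero_mul, add_zero, ← hcx]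
    · show f * (x + y) = y
      have hz : f * (1 - f) = 0 := by rw [mul_sub, mul_one, hf.eq, sub_self]
      calc f * (x + y) = (f * (1 - f)) * cx + (f * f) * cy := by rw [hcx, hcy]; ring
        _ = y := by rw [hz, hf.eq, zero_mul, zero_add, ← hcy]
  exact Module.Projective.of_equiv (LinearEquiv.ofBijective ψ ⟨hinj, hsurjψ⟩).symm


/-- If `I` is a finitely generated pure ideal of `R`, then `R` is semihereditary if and
only if `R ⋈ I` is semihereditary. -/
theorem isSemihereditary_dup_iff (R : Type u) [CommRing R] (I : Ideal R)
    (hfg : I.FG) (hpure : Module.Flat R (R ⧸ I)) :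
    IsSemihereditary R ↔ IsSemihereditary (dup R I) := by
  obtain ⟨e, he, hI⟩ := exists_idem I hfg hpure
  subst hI
  set I : Ideal R := Ideal.span {e} with hIdef
  have hEmem : ((0 : R), e) ∈ dup R I := by
    have h0 : e - (0 : R) ∈ Ideal.span {e} := by
      rw [sub_zero]; exact Ideal.mem_span_singleton_self e
    exact h0
  let E : dup R I := ⟨(0, e), hEmem⟩
  have hE : IsIdempotentElem E := by
    apply Subtype.ext
    have h1 : ((E * E : dup R I) : R × R) = ((0, e) : R × R) * ((0, e) : R × R) := rfl
    rw [h1]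
    apply Prod.ext
    · simp [E]
    · simpa using he.eq
  have hsurj1 : Function.Surjective (dupFst R I) := fun r => ⟨diag R I r, rfl⟩
  set ψ : dup R I →+* R ⧸ Ideal.span {1 - e} :=
    (Ideal.Quotient.mk (Ideal.span {1 - e})).comp (dupSnd R I) with hψ
  have hsurj2 : Function.Surjective ψ := by
    intro y
    obtain ⟨s, hs⟩ := Ideal.Quotient.mk_surjective y
    exact ⟨diag R I s, hs⟩
  have hker1 : RingHom.ker (dupFst R I) = Ideal.span {E} := by
    apply le_antisymm
    · rintro ⟨⟨r, s⟩, hrs⟩ ht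
      have hr : r = 0 := ht
      have hs : s ∈ I := by
        have := hrs
        rw [mem_dup] at this
        simpa [hr] using this
      obtain ⟨c, hc⟩ := Ideal.mem_span_singleton.mp hs
      rw [Ideal.mem_span_singleton]
      refine ⟨diag R I c, Subtype.ext (Prod.ext ?_ ?_)⟩
      · show r = 0 * c
        rw [hr, zero_mul]
      · show s = e * c
        exact hc
    · rw [Ideal.span_le, Set.singleton_subset_iff]
      exact RingHom.mem_ker.mpr rfl
  have hker2 : RingHom.ker ψ = Ideal.span {1 - E} := by
    apply le_antisymm
    · rintro ⟨⟨r, s⟩, hrs⟩ ht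
      have hs : s ∈ Ideal.span {1 - e} := by
        have := RingHom.mem_ker.mp ht
        exact Ideal.Quotient.eq_zero_iff_mem.mp this
      obtain ⟨c, hc⟩ := Ideal.mem_span_singleton.mp hs
      rw [Ideal.mem_span_singleton]
      refine ⟨⟨(r, s), hrs⟩, Subtype.ext (Prod.ext ?_ ?_)⟩
      · show r = (1 - 0) * r
        rw [sub_zero, one_mul]
      · show s = (1 - e) * s
        rw [hc, ← mul_assoc, he.one_sub.eq]
    · rw [Ideal.span_le, Set.singleton_subset_iff]
      refine RingHom.mem_ker.mpr ?_
      show Ideal.Quotient.mk (Ideal.span {1 - e}) ((((1 : dup R I) - E : dup R I) : R × R).2) = 0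
      have : (((1 : dup R I) - E : dup R I) : R × R).2 = 1 - e := rfl
      rw [this]
      exact Ideal.Quotient.eq_zero_iff_mem.mpr (Ideal.mem_span_singleton_self _)
  let ρ : (dup R I ⧸ Ideal.span {E}) ≃+* R :=
    (Ideal.quotEquivOfEq hker1.symm).trans (RingHom.quotientKerEquivOfSurjective hsurj1)
  let τ : (dup R I ⧸ Ideal.span {1 - E}) ≃+* (R ⧸ Ideal.span {1 - e}) :=
    (Ideal.quotEquivOfEq hker2.symm).trans (RingHom.quotientKerEquivOfSurjective hsurj2)
  constructor
  · intro h
    have hS := isSemihereditary_quotient_span_idem he.one_sub h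
    exact isSemihereditary_glue hE (isSemihereditary_of_ringEquiv ρ.symm h)
      (isSemihereditary_of_ringEquiv τ.symm hS)
  · intro h
    exact isSemihereditary_of_ringEquiv ρ (isSemihereditary_quotient_span_idem hE h)

end Paper
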